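/- Let m ≥ 2, let ξ_1,…,ξ_m ∈ ℝ^{m−1} be affinely independent points, and let η ∈ ℝ^{m−1} be such that for each j ∈ {1,…,m} the m points {ξ_1,…,ξ_{j−1},ξ_{j+1},…,ξ_m, η} are affinely independent. Set Δ = conv{ξ_1,…,ξ_m} and let a ∈ int Δ. Then there exists i ∈ {1,…,m} such that a ∈ conv{ξ_1,…,ξ_{i−1},ξ_{i+1},…,ξ_m, η}. -/
import Mathlib


open scoped ENNReal BigOperators
open Filter

/-- The `l_p` norm of a finite real vector, `p ∈ [1,∞]`. -/
noncomputable def lpNorm {ι : Type*} [Fintype ι] (p : ℝ≥0∞) (x : ι → ℝ) : ℝ :=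
  if p = ∞ then ⨆ i, |x i| else (∑ i, |x i| ^ p.toReal) ^ (1 / p.toReal)

/-- The mixed norm on `ℝ^{k₁⋯k_d}`, defined recursively: for `d = 1` it is the
`l_{p₁}^{k₁}` norm, and for `d ≥ 2` one first takes the mixed norm in the first
`d-1` indices and then the `l_{p_d}^{k_d}` norm in the last index. -/
noncomputable def mixedNorm : (d : ℕ) → (k : Fin d → ℕ) → (p : Fin d → ℝ≥0∞) →
    ((∀ i, Fin (k i)) → ℝ) → ℝ
  | 0, _, _, x => |x (fun i => i.elim0)|
  | d + 1, k, p, x =>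
      lpNorm (p (Fin.last d)) (fun jd : Fin (k (Fin.last d)) =>
        mixedNorm d (fun i => k i.castSucc) (fun i => p i.castSucc)
          (fun y => x (Fin.snoc y jd)))

/-- The `l_q` norm (finite exponent `q`). -/
noncomputable def lqNorm {ι : Type*} [Fintype ι] (q : ℝ) (x : ι → ℝ) : ℝ :=
  (∑ i, |x i| ^ q) ^ (1 / q)

/-- The Kolmogorov `n`-width of `M` with respect to the norm `nrm`. -/
noncomputable def kolWidth {ι : Type*} [Fintype ι] (n : ℕ) (M : Set (ι → ℝ))
    (nrm : (ι → ℝ) → ℝ) : ℝ :=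
  ⨅ L : {L : Submodule ℝ (ι → ℝ) // Module.finrank ℝ L ≤ n},
    ⨆ x ∈ M, ⨅ y ∈ (L.1 : Set (ι → ℝ)), nrm (x - y)

/-- `Φ(p̄, k̄, q) = ∏_j k_j^{(1/q - 1/p_j)_+}`. -/
noncomputable def Phi {d : ℕ} (p : Fin d → ℝ≥0∞) (k : Fin d → ℕ) (q : ℝ) : ℝ :=
  ∏ j, (k j : ℝ) ^ max (1 / q - (1 / p j).toReal) 0

/-- `∑_j λ_j / p_{α_j, i}`, the reciprocal of `θ_i(ᾱ, I)`. -/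
noncomputable def thetaRecip {d m : ℕ} {A : Type*} (p : A → Fin d → ℝ≥0∞)
    (α : Fin m → A) (lam : Fin m → ℝ) (i : Fin d) : ℝ :=
  ∑ j, lam j * (1 / p (α j) i).toReal

/-- The vector `θ̄(ᾱ, I)`, given by `1/θ_i = ∑_j λ_j / p_{α_j, i}`. -/
noncomputable def theta {d m : ℕ} {A : Type*} (p : A → Fin d → ℝ≥0∞)
    (α : Fin m → A) (lam : Fin m → ℝ) (i : Fin d) : ℝ≥0∞ :=
  (ENNReal.ofReal (thetaRecip p α lam i))⁻¹

/-- `(I, λ)` witnesses that `ᾱ ∈ 𝒩_m`: `#I = m - 1`, the `λ_j` are positive and sum to `1`,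
`∑_j λ_j / p_{α_j, i} = 1/q` for `i ∈ I`, and the points `((1/p_{α_j,i})_{i∈I})_j`
are affinely independent. -/
def IsNWitness {d : ℕ} {A : Type*} (q : ℝ) (p : A → Fin d → ℝ≥0∞) {m : ℕ}
    (α : Fin m → A) (I : Finset (Fin d)) (lam : Fin m → ℝ) : Prop :=
  I.card = m - 1 ∧ (∀ j, 0 < lam j) ∧ ∑ j, lam j = 1 ∧
    (∀ i ∈ I, thetaRecip p α lam i = 1 / q) ∧
    AffineIndependent ℝ (fun j : Fin m => fun i : I => (1 / p (α j) i).toReal)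

/-- `Ψ({p̄_α}, k̄, q) = min_{1 ≤ m ≤ d+1} inf_{(ᾱ,I) : ᾱ ∈ 𝒩_m}
ν_{α_1}^{λ_1} ⋯ ν_{α_m}^{λ_m} Φ(θ̄(ᾱ,I), k̄, q)`. -/
noncomputable def Psi {d : ℕ} {A : Type*} (p : A → Fin d → ℝ≥0∞) (ν : A → ℝ)
    (k : Fin d → ℕ) (q : ℝ) : ℝ :=
  sInf { r : ℝ | ∃ m, 1 ≤ m ∧ m ≤ d + 1 ∧ ∃ (α : Fin m → A) (I : Finset (Fin d))
    (lam : Fin m → ℝ), IsNWitness q p α I lam ∧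
      r = (∏ j, ν (α j) ^ lam j) * Phi (theta p α lam) k q }

/-- The family `(p̄_α)_{α ∈ A}` is in general position. -/
def GeneralPosition {d : ℕ} {A : Type*} (q : ℝ) (p : A → Fin d → ℝ≥0∞) : Prop :=
  (∀ m, 2 ≤ m → m ≤ d + 1 → ∀ α : Fin m → A, Function.Injective α →
    ∀ I : Finset (Fin d), I.card = m - 1 →
      AffineIndependent ℝ (fun j : Fin m => fun i : I => (1 / p (α j) i).toReal)) ∧
  (∀ m, 1 ≤ m → m ≤ d + 1 → ∀ (α : Fin m → A) (I : Finset (Fin d)) (lam : Fin m → ℝ),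
    IsNWitness q p α I lam → ∀ i ∉ I, thetaRecip p α lam i ≠ 1 / q)

open scoped Classical in
/-- The 0–1 vector `x̂(s̄)` equal to `1` exactly on the box `{(i₁,…,i_d) : i_j < s_j}`. -/
noncomputable def xhat (d : ℕ) (k : Fin d → ℕ) (s : Fin d → ℕ) :
    (∀ i, Fin (k i)) → ℝ :=
  fun idx => if ∀ i, (idx i : ℕ) < s i then 1 else 0

/-- Lemma on convex hulls. If `ξ_1, …, ξ_m ∈ ℝ^{m-1}` are affinely
independent, `η` is such that each family obtained by replacing one `ξ_j` by `η` is
affinely independent, and `a` is interior to `conv{ξ_1,…,ξ_m}`, then `a` lies in some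
`conv{ξ_1,…,ξ_{i-1},ξ_{i+1},…,ξ_m,η}`. -/
theorem statement7 (m : ℕ) (hm : 2 ≤ m) (ξ : Fin m → (Fin (m - 1) → ℝ))
    (hξ : AffineIndependent ℝ ξ) (η : Fin (m - 1) → ℝ)
    (hη : ∀ j : Fin m, AffineIndependent ℝ (Function.update ξ j η))
    (a : Fin (m - 1) → ℝ)
    (ha : a ∈ interior (convexHull ℝ (Set.range ξ))) :
    ∃ i : Fin m, a ∈ convexHull ℝ (Set.range (Function.update ξ i η)) := by
  classical
  have hcard : Fintype.card (Fin m) = Module.finrank ℝ (Fin (m - 1) → ℝ) + 1 := by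
    simp only [Fintype.card_fin, Module.finrank_fintype_fun_eq_card]
    omega
  have htop : affineSpan ℝ (Set.range ξ) = ⊤ :=
    hξ.affineSpan_eq_top_iff_card_eq_finrank_add_one.mpr hcard
  let B : AffineBasis (Fin m) ℝ (Fin (m - 1) → ℝ) := ⟨ξ, hξ, htop⟩
  have hB : ⇑B = ξ := rfl
  set bb : Fin m → ℝ := fun j => B.coord j a with hbbdef
  set cc : Fin m → ℝ := fun j => B.coord j η with hccdef
  have hbpos : ∀ j, 0 < bb j := by
    have hint := B.interior_convexHull
    rw [hB] at hint
    rw [hint] at ha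
    exact ha
  have hsb : ∑ j, bb j = 1 := B.sum_coord_apply_eq_one a
  have hsc : ∑ j, cc j = 1 := B.sum_coord_apply_eq_one η
  have ha' : ∑ j, bb j • ξ j = a := by
    have h1 := B.affineCombination_coord_eq_self a
    rwa [Finset.affineCombination_eq_linear_combination _ _ _ hsb, hB] at h1
  have hη' : ∑ j, cc j • ξ j = η := by
    have h1 := B.affineCombination_coord_eq_self η
    rwa [Finset.affineCombination_eq_linear_combination _ _ _ hsc, hB] at h1
  -- choose the index minimizing bb j / cc j among positive cc j
  have hSne : ∃ j, 0 < cc j := by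
    by_contra h
    push_neg at h
    have : ∑ j, cc j ≤ 0 := Finset.sum_nonpos fun j _ => h j
    linarith
  obtain ⟨j₀, hj₀⟩ := hSne
  obtain ⟨i, hiS, hmin⟩ := (Finset.univ.filter (fun j => 0 < cc j)).exists_min_image
    (fun j => bb j / cc j) ⟨j₀, by simp [hj₀]⟩
  have hci : 0 < cc i := (Finset.mem_filter.mp hiS).2
  set t : ℝ := bb i / cc i with htdef
  have ht0 : 0 ≤ t := div_nonneg (hbpos i).le hci.le
  have hti : t * cc i = bb i := div_mul_cancel₀ _ hci.ne'
  set w : Fin m → ℝ := fun j => if j = i then t else bb j - t * cc j with hwdef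
  have hw0 : ∀ j, 0 ≤ w j := by
    intro j
    by_cases hj : j = i
    · simp [hwdef, hj, ht0]
    · simp only [hwdef, if_neg hj, sub_nonneg]
      rcases le_or_gt (cc j) 0 with h | h
      · have := mul_nonpos_of_nonneg_of_nonpos ht0 h
        linarith [hbpos j]
      · have hmj := hmin j (by simp [h])
        rw [div_le_div_iff₀ hci h] at hmj
        rw [htdef, div_mul_eq_mul_div, div_le_iff₀ hci]
        linarith
  have hsbE : ∑ j ∈ Finset.univ.erase i, bb j = 1 - bb i := by
    have := Finset.add_sum_erase Finset.univ bb (Finset.mem_univ i)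
    linarith
  have hscE : ∑ j ∈ Finset.univ.erase i, cc j = 1 - cc i := by
    have := Finset.add_sum_erase Finset.univ cc (Finset.mem_univ i)
    linarith
  have hw1 : ∑ j, w j = 1 := by
    rw [← Finset.add_sum_erase _ w (Finset.mem_univ i)]
    have h2 : ∑ j ∈ Finset.univ.erase i, w j
        = ∑ j ∈ Finset.univ.erase i, (bb j - t * cc j) :=
      Finset.sum_congr rfl fun j hj => by
        simp [hwdef, Finset.ne_of_mem_erase hj]
    rw [h2, Finset.sum_sub_distrib, ← Finset.mul_sum, hsbE, hscE]
    simp only [hwdef, if_pos rfl]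
    nlinarith [hti]
  have hcomb : ∑ j, w j • Function.update ξ i η j = a := by
    have hfeq : ∀ j, w j • Function.update ξ i η j
        = Function.update (fun j => w j • ξ j) i (t • η) j := by
      intro j
      by_cases hj : j = i
      · subst hj; simp [hwdef]
      · simp [Function.update_of_ne hj, hwdef]
    rw [Finset.sum_congr rfl fun j _ => hfeq j,
      Finset.sum_update_of_mem (Finset.mem_univ i), Finset.sdiff_singleton_eq_erase]
    have hbE : ∑ j ∈ Finset.univ.erase i, bb j • ξ j = a - bb i • ξ i := by
      have := Finset.add_sum_erase Finset.univ (fun j => bb j • ξ j) (Finset.mem_univ i)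
      rw [ha'] at this
      rw [eq_sub_iff_add_eq, add_comm]
      exact this
    have hcE : ∑ j ∈ Finset.univ.erase i, cc j • ξ j = η - cc i • ξ i := by
      have := Finset.add_sum_erase Finset.univ (fun j => cc j • ξ j) (Finset.mem_univ i)
      rw [hη'] at this
      rw [eq_sub_iff_add_eq, add_comm]
      exact this
    have h3 : ∑ j ∈ Finset.univ.erase i, w j • ξ j
        = ∑ j ∈ Finset.univ.erase i, (bb j • ξ j - t • (cc j • ξ j)) :=
      Finset.sum_congr rfl fun j hj => by
        simp only [hwdef, if_neg (Finset.ne_of_mem_erase hj), sub_smul, mul_smul]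
    rw [h3, Finset.sum_sub_distrib, ← Finset.smul_sum, hbE, hcE]
    rw [smul_sub, smul_smul, hti]
    module
  refine ⟨i, ?_⟩
  have hmem := affineCombination_mem_convexHull
    (s := Finset.univ) (v := Function.update ξ i η) (w := w)
    (fun j _ => hw0 j) hw1
  rwa [Finset.affineCombination_eq_linear_combination _ _ _ hw1, hcomb] at hmem
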